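/- Suppose Z > 0, R : X → ℝ_{≥0}, and the triple (P_F, P_B, Z) satisfies trajectory balance for R, with P_B(s|s') > 0 for every edge s→s' of G. Let x, x' ∈ X, let 1 ≤ K ≤ D, let τ be a K-step backward trajectory from x ending at a state s, and let τ' be a K-step forward trajectory from s to x'. Then R(x)·P_B(τ|x)·P_F(τ') = R(x')·P_B(τ'|x')·P_F(τ). -/

import Mathlib

open scoped BigOperators Classical

/-- The GFlowNet state space `S = {0,1,⊘}^D`: functions from `Fin D` to `Option Bool`,
with `none` denoting the unspecified entry `⊘`. -/
abbrev GState (D : ℕ) := Fin D → Option Bool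

/-- The initial state `s₀`, with all entries `⊘`. -/
def initState (D : ℕ) : GState D := fun _ => none

/-- `s'` is a child of `s` (edge `s → s'` of the DAG `G`): `s'` is obtained from `s`
by changing exactly one `⊘`-entry of `s` to `0` or `1`. -/
def IsChild {D : ℕ} (s s' : GState D) : Prop :=
  ∃ (i : Fin D) (b : Bool), s i = none ∧ s' = Function.update s i (some b)

/-- Terminal states: no `⊘`-entry. -/
def IsTerminal {D : ℕ} (s : GState D) : Prop := ∀ i, s i ≠ none

/-- The embedding of `X = {0,1}^D` as the set of terminal states. -/
def ofX {D : ℕ} (x : Fin D → Bool) : GState D := fun i => some (x i)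

/-- `|s|`: the number of non-`⊘` entries of `s`. -/
def numAssigned {D : ℕ} (s : GState D) : ℕ :=
  (Finset.univ.filter fun i => s i ≠ none).card

/-- A complete trajectory `τ = (t₀ → t₁ → ⋯ → t_n)`, encoded as the list of its states:
it starts at `s₀`, each consecutive pair is an edge of `G`, and it ends at a terminal state. -/
def IsCompleteTraj {D : ℕ} (l : List (GState D)) : Prop :=
  l.head? = some (initState D) ∧ l.Chain' IsChild ∧
    ∃ s, l.getLast? = some s ∧ IsTerminal s

/-- The trajectory `l` ends at the terminal state corresponding to `x ∈ X`. -/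
def EndsAt {D : ℕ} (l : List (GState D)) (x : Fin D → Bool) : Prop :=
  l.getLast? = some (ofX x)

/-- `PF` is a forward policy: for every nonterminal `s`, `PF s ·` is a probability
distribution supported on the children of `s` (`PF s s'` is `P_F(s'|s)`). -/
def IsForwardPolicy {D : ℕ} (PF : GState D → GState D → ℝ) : Prop :=
  ∀ s : GState D, ¬ IsTerminal s →
    (∀ s', 0 ≤ PF s s') ∧ (∀ s', PF s s' ≠ 0 → IsChild s s') ∧
    (∑ s' : GState D, PF s s' = 1)

/-- `PB` is a backward policy: for every noninitial `s'`, `PB s' ·` is a probability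
distribution supported on the parents of `s'` (`PB s' s` is `P_B(s|s')`). -/
def IsBackwardPolicy {D : ℕ} (PB : GState D → GState D → ℝ) : Prop :=
  ∀ s' : GState D, s' ≠ initState D →
    (∀ s, 0 ≤ PB s' s) ∧ (∀ s, PB s' s ≠ 0 → IsChild s s') ∧
    (∑ s : GState D, PB s' s = 1)

/-- `P_F(τ) = ∏_{i<n} P_F(t_{i+1}|t_i)` along a trajectory. -/
def trajPF {D : ℕ} (PF : GState D → GState D → ℝ) (l : List (GState D)) : ℝ :=
  ((l.zip l.tail).map fun p => PF p.1 p.2).prod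

/-- `P_B(τ|x) = ∏_{i<n} P_B(t_i|t_{i+1})` along a trajectory. -/
def trajPB {D : ℕ} (PB : GState D → GState D → ℝ) (l : List (GState D)) : ℝ :=
  ((l.zip l.tail).map fun p => PB p.2 p.1).prod

/-- Trajectory balance for reward `R`: `Z·P_F(τ) = R(x)·P_B(τ|x)` for every complete
trajectory `τ` ending at `x`. -/
def TrajBalance {D : ℕ} (PF PB : GState D → GState D → ℝ) (Z : ℝ)
    (R : (Fin D → Bool) → ℝ) : Prop :=
  ∀ (l : List (GState D)) (x : Fin D → Bool),
    IsCompleteTraj l → EndsAt l x → Z * trajPF PF l = R x * trajPB PB l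

/-- The terminating probability `P_T(x)`: the sum of `P_F(τ)` over all complete
trajectories ending at `x`. -/
noncomputable def PT {D : ℕ} (PF : GState D → GState D → ℝ) (x : Fin D → Bool) : ℝ :=
  ∑ᶠ l ∈ {l : List (GState D) | IsCompleteTraj l ∧ EndsAt l x}, trajPF PF l

/-- A path in `G` from `s` to `t`, encoded as the list of its states. -/
def IsPath {D : ℕ} (l : List (GState D)) (s t : GState D) : Prop :=
  l.Chain' IsChild ∧ l.head? = some s ∧ l.getLast? = some t
/-- The state flow `F(s)`: sum of `F(τ) = Z·P_F(τ)` over complete trajectories through `s`. -/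
noncomputable def stateFlow {D : ℕ} (PF : GState D → GState D → ℝ) (Z : ℝ)
    (s : GState D) : ℝ :=
  ∑ᶠ l ∈ {l : List (GState D) | IsCompleteTraj l ∧ s ∈ l}, Z * trajPF PF l

/-- The edge flow `F(s→s')`: sum of `F(τ) = Z·P_F(τ)` over complete trajectories
containing the edge `s → s'`. -/
noncomputable def edgeFlow {D : ℕ} (PF : GState D → GState D → ℝ) (Z : ℝ)
    (s s' : GState D) : ℝ :=
  ∑ᶠ l ∈ {l : List (GState D) | IsCompleteTraj l ∧ (s, s') ∈ l.zip l.tail}, Z * trajPF PF l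

/-- The Shannon entropy `H[P_F(·|s)]` of the forward policy at `s` (natural log,
with `0·log 0 = 0`). -/
noncomputable def stepEntropyF {D : ℕ} (PF : GState D → GState D → ℝ) (s : GState D) : ℝ :=
  ∑ s' : GState D, Real.negMulLog (PF s s')

/-- The entropy of the flow determined by `P_F`:
`H[P_F] = Σ_τ P_F(τ) · Σ_{i<n} H[P_F(·|t_i)]`. -/
noncomputable def flowEntropy {D : ℕ} (PF : GState D → GState D → ℝ) : ℝ :=
  ∑ᶠ l ∈ {l : List (GState D) | IsCompleteTraj l},
    trajPF PF l * (l.dropLast.map (stepEntropyF PF)).sum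

/-- The uniform backward policy `P_B°(s|s') = 1/|s'|` for each parent `s` of `s'`. -/
noncomputable def uniformBackward (D : ℕ) : GState D → GState D → ℝ :=
  fun s' s => if IsChild s s' then 1 / (numAssigned s' : ℝ) else 0

section Aux
variable {D : ℕ}

/-- Generic product along a trajectory. -/
def trajP (f : GState D → GState D → ℝ) (l : List (GState D)) : ℝ :=
  ((l.zip l.tail).map fun p => f p.1 p.2).prod

lemma trajP_singleton (f : GState D → GState D → ℝ) (a : GState D) :
    trajP f [a] = 1 := rfl

lemma trajP_cons2 (f : GState D → GState D → ℝ) (a b : GState D) (l : List (GState D)) :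
    trajP f (a :: b :: l) = f a b * trajP f (b :: l) := by
  simp [trajP]

lemma trajP_glue (f : GState D → GState D → ℝ) :
    ∀ (p q : List (GState D)) (m : GState D),
      p.getLast? = some m → q.head? = some m →
      trajP f (p ++ q.tail) = trajP f p * trajP f q
  | [], q, m, hp, _ => by simp at hp
  | [a], q, m, hp, hq => by
      simp at hp
      subst hp
      cases q with
      | nil => simp at hq
      | cons b q' =>
          simp at hq
          subst hq
          simp [trajP_singleton]
  | a :: b :: p', q, m, hp, hq => by
      rw [List.getLast?_cons_cons] at hp
      have IH := trajP_glue f (b :: p') q m hp hq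
      rw [List.cons_append] at IH ⊢
      rw [List.cons_append, trajP_cons2, trajP_cons2, IH]
      ring

lemma trajP_pos (f : GState D → GState D → ℝ)
    (hf : ∀ a b, IsChild a b → 0 < f a b) :
    ∀ (l : List (GState D)), l.Chain' IsChild → 0 < trajP f l
  | [], _ => by norm_num [trajP]
  | [a], _ => by norm_num [trajP_singleton]
  | a :: b :: l, h => by
      replace h := List.isChain_cons_cons.mp h
      rw [trajP_cons2]
      exact mul_pos (hf a b h.1) (trajP_pos f hf (b :: l) h.2)

lemma numAssigned_update_none (s : GState D) (i : Fin D) (h : s i ≠ none) :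
    numAssigned (Function.update s i none) = numAssigned s - 1 := by
  unfold numAssigned
  have hset : (Finset.univ.filter fun j => Function.update s i none j ≠ none)
      = (Finset.univ.filter fun j => s j ≠ none).erase i := by
    ext j
    by_cases hj : j = i <;>
      simp [Finset.mem_erase, Function.update_apply, hj]
  rw [hset, Finset.card_erase_of_mem (by simp [h])]

lemma exists_path_from_init :
    ∀ (n : ℕ) (s : GState D), numAssigned s = n →
      ∃ l : List (GState D), l ≠ [] ∧ l.Chain' IsChild ∧
        l.head? = some (initState D) ∧ l.getLast? = some s := by
  intro n
  induction n with
  | zero =>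
      intro s hn
      have : s = initState D := by
        funext i
        by_contra h
        have hi : i ∈ Finset.univ.filter fun j => s j ≠ none := by
          simp [initState] at h ⊢
          intro hc
          exact h (by simp [hc, initState])
        have hc := Finset.card_pos.mpr ⟨i, hi⟩
        unfold numAssigned at hn
        omega
      exact ⟨[s], by simp, List.isChain_singleton _, by simp [this], by simp⟩
  | succ n ih =>
      intro s hn
      have hpos : 0 < (Finset.univ.filter fun j => s j ≠ none).card := by
        rw [show (Finset.univ.filter fun j => s j ≠ none).card = numAssigned s from rfl, hn]
        omega
      obtain ⟨i, hi⟩ := Finset.card_pos.mp hpos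
      simp only [Finset.mem_filter] at hi
      have hi' : s i ≠ none := hi.2
      set s' := Function.update s i none with hs'
      have hn' : numAssigned s' = n := by
        rw [hs', numAssigned_update_none s i hi', hn]
        omega
      obtain ⟨l, hne, hchain, hhead, hlast⟩ := ih s' hn'
      obtain ⟨b, hb⟩ : ∃ b, s i = some b := Option.ne_none_iff_exists'.mp hi'
      have hchild : IsChild s' s := by
        refine ⟨i, b, by simp [hs'], ?_⟩
        rw [hs', Function.update_idem, ← hb, Function.update_eq_self]
      refine ⟨l ++ [s], by simp, ?_, ?_, ?_⟩
      · apply List.IsChain.append hchain (by simp)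
        intro a ha c hc
        simp at hc
        subst hc
        rw [hlast] at ha
        simp at ha
        subst ha
        exact hchild
      · rw [List.head?_append_of_ne_nil _ hne, hhead]
      · simp

lemma path_glue_complete {s : GState D} {x : Fin D → Bool}
    {σ τ : List (GState D)}
    (hσne : σ ≠ []) (hσc : σ.Chain' IsChild)
    (hσh : σ.head? = some (initState D)) (hσl : σ.getLast? = some s)
    (hτ : IsPath τ s (ofX x)) (hτlen : 2 ≤ τ.length) :
    IsCompleteTraj (σ ++ τ.tail) ∧ EndsAt (σ ++ τ.tail) x := by
  obtain ⟨hτc, hτh, hτl⟩ := hτ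
  obtain ⟨a, t, rfl⟩ : ∃ a t, τ = a :: t := by
    cases τ with
    | nil => simp at hτh
    | cons a t => exact ⟨a, t, rfl⟩
  have ha : s = a := by symm; simpa using hτh
  subst ha
  have htne : t ≠ [] := by
    intro h; subst h; simp at hτlen
  have htail : (s :: t).tail = t := rfl
  rw [htail]
  have hst : (s :: t).getLast? = t.getLast? := by
    cases t with
    | nil => exact absurd rfl htne
    | cons b t' => exact List.getLast?_cons_cons ..
  have hlast : (σ ++ t).getLast? = some (ofX x) := by
    rw [List.getLast?_append_of_ne_nil _ htne, ← hst]
    exact hτl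
  refine ⟨⟨?_, ?_, ofX x, hlast, ?_⟩, hlast⟩
  · rw [List.head?_append_of_ne_nil _ hσne, hσh]
  · apply List.IsChain.append hσc ((List.isChain_cons.mp hτc).2)
    intro y hy z hz
    rw [hσl] at hy
    simp at hy
    subst hy
    exact (List.isChain_cons.mp hτc).1 z hz
  · intro i
    simp [ofX]

end Aux

/-- If `(P_F, P_B, Z)` with `Z > 0` satisfies trajectory balance for a
nonnegative reward `R`, with `P_B` positive on every edge of `G`, then for any `K`-step
backward trajectory `τ` from `x` ending at `s` and `K`-step forward trajectory `τ'` from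
`s` to `x'`, one has `R(x)·P_B(τ|x)·P_F(τ') = R(x')·P_B(τ'|x')·P_F(τ)`. -/
theorem statement1 {D : ℕ} (hD : 1 ≤ D)
    (PF PB : GState D → GState D → ℝ) (Z : ℝ) (hZ : 0 < Z)
    (hPF : IsForwardPolicy PF) (hPB : IsBackwardPolicy PB)
    (R : (Fin D → Bool) → ℝ) (hR : ∀ x, 0 ≤ R x)
    (hTB : TrajBalance PF PB Z R)
    (hBpos : ∀ s s' : GState D, IsChild s s' → 0 < PB s' s)
    (x x' : Fin D → Bool) (K : ℕ) (hK1 : 1 ≤ K) (hKD : K ≤ D)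
    (s : GState D) (hs : numAssigned s = D - K)
    (τ τ' : List (GState D))
    (hτ : IsPath τ s (ofX x)) (hτlen : τ.length = K + 1)
    (hτ' : IsPath τ' s (ofX x')) (hτ'len : τ'.length = K + 1) :
    R x * trajPB PB τ * trajPF PF τ' = R x' * trajPB PB τ' * trajPF PF τ := by
  obtain ⟨σ, hσne, hσc, hσh, hσl⟩ := exists_path_from_init (D - K) s hs
  have h1 := path_glue_complete hσne hσc hσh hσl hτ (by omega)
  have h2 := path_glue_complete hσne hσc hσh hσl hτ' (by omega)
  have e1 := hTB _ x h1.1 h1.2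
  have e2 := hTB _ x' h2.1 h2.2
  have hPBdef : ∀ l : List (GState D), trajPB PB l = trajP (fun a b => PB b a) l :=
    fun l => rfl
  have hPFdef : ∀ l : List (GState D), trajPF PF l = trajP PF l := fun l => rfl
  have gF1 : trajPF PF (σ ++ τ.tail) = trajPF PF σ * trajPF PF τ := by
    rw [hPFdef, hPFdef, hPFdef]; exact trajP_glue PF σ τ s hσl hτ.2.1
  have gF2 : trajPF PF (σ ++ τ'.tail) = trajPF PF σ * trajPF PF τ' := by
    rw [hPFdef, hPFdef, hPFdef]; exact trajP_glue PF σ τ' s hσl hτ'.2.1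
  have gB1 : trajPB PB (σ ++ τ.tail) = trajPB PB σ * trajPB PB τ := by
    rw [hPBdef, hPBdef, hPBdef]; exact trajP_glue _ σ τ s hσl hτ.2.1
  have gB2 : trajPB PB (σ ++ τ'.tail) = trajPB PB σ * trajPB PB τ' := by
    rw [hPBdef, hPBdef, hPBdef]; exact trajP_glue _ σ τ' s hσl hτ'.2.1
  rw [gF1, gB1] at e1
  rw [gF2, gB2] at e2
  have hPBσ : 0 < trajPB PB σ := by
    rw [hPBdef]
    exact trajP_pos _ (fun a b h => hBpos a b h) σ hσc
  have key : trajPB PB σ * (R x * trajPB PB τ * trajPF PF τ')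
      = trajPB PB σ * (R x' * trajPB PB τ' * trajPF PF τ) := by
    linear_combination trajPF PF τ * e2 - trajPF PF τ' * e1
  exact mul_left_cancel₀ (ne_of_gt hPBσ) key
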